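/- Let b, c, m : ℝ → ℝ be smooth, let u : ℝ² → ℝ be a smooth solution of the wave equation F[u] = 0, and let v : ℝ² → ℝ be a smooth solution of the adjoint equation ∂ₜ²v − ∂ₓ²v − b(u)·∂ₜv − c(u)·∂ₓv + m′(u)·v = 0 on ℝ² (so that (u,v) solves the extended Euler–Lagrange system of the Lagrangian L = v·F[u]). Then the Noether current of the time-translation symmetry, Ĉᵗ = −v·∂ₜ²u − (b(u)·v − ∂ₜv)·∂ₜu and Ĉˣ = v·∂ₜ∂ₓu − (c(u)·v + ∂ₓv)·∂ₜu, is divergence-free: ∂ₜĈᵗ + ∂ₓĈˣ = 0 on ℝ². -/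

import Mathlib

noncomputable section

open Real

/-- Partial derivative in the first (time) variable. -/
def Dt (u : ℝ → ℝ → ℝ) : ℝ → ℝ → ℝ := fun t x => deriv (fun s => u s x) t

/-- Partial derivative in the second (space) variable. -/
def Dx (u : ℝ → ℝ → ℝ) : ℝ → ℝ → ℝ := fun t x => deriv (fun s => u t s) x

/-- Smoothness (C^∞) of a function of two real variables. -/
def Smooth2 (u : ℝ → ℝ → ℝ) : Prop := ContDiff ℝ (⊤ : ℕ∞) (fun p : ℝ × ℝ => u p.1 p.2)
/-- The semilinear wave operator F[u] = ∂ₜ²u − ∂ₓ²u + b(u)∂ₜu + c(u)∂ₓu + m(u). -/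
def Fop (b c m : ℝ → ℝ) (u : ℝ → ℝ → ℝ) : ℝ → ℝ → ℝ := fun t x =>
  Dt (Dt u) t x - Dx (Dx u) t x + b (u t x) * Dt u t x + c (u t x) * Dx u t x + m (u t x)

/-- The adjoint linearized operator along u:
L*[u]q = ∂ₜ²q − ∂ₓ²q − b(u)∂ₜq − c(u)∂ₓq + m′(u)q. -/
def Lstar (b c m : ℝ → ℝ) (u q : ℝ → ℝ → ℝ) : ℝ → ℝ → ℝ := fun t x =>
  Dt (Dt q) t x - Dx (Dx q) t x - b (u t x) * Dt q t x - c (u t x) * Dx q t x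
    + deriv m (u t x) * q t x

lemma s2_one_le : ((⊤:ℕ∞) : WithTop ℕ∞) ≠ 0 := by simp

lemma s2_add_one_le : ((⊤:ℕ∞) : WithTop ℕ∞) + 1 ≤ ((⊤:ℕ∞) : WithTop ℕ∞) := by norm_cast

/-- t-slice has a derivative, equal to `fderiv` applied to `(1,0)`. -/
lemma hasDerivAt_slice_t' {u : ℝ → ℝ → ℝ} (hu : Smooth2 u) (t x : ℝ) :
    HasDerivAt (fun s => u s x)
      (fderiv ℝ (fun p : ℝ × ℝ => u p.1 p.2) (t, x) (1, 0)) t := by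
  have h1 : HasDerivAt (fun s : ℝ => ((s, x) : ℝ × ℝ)) ((1:ℝ), (0:ℝ)) t :=
    (hasDerivAt_id t).prodMk (hasDerivAt_const t x)
  have h2 : DifferentiableAt ℝ (fun p : ℝ × ℝ => u p.1 p.2) (t, x) :=
    (hu.differentiable s2_one_le) (t, x)
  simpa [Function.comp_def] using h2.hasFDerivAt.comp_hasDerivAt t h1

lemma Dt_eq_fderiv {u : ℝ → ℝ → ℝ} (hu : Smooth2 u) (t x : ℝ) :
    Dt u t x = fderiv ℝ (fun p : ℝ × ℝ => u p.1 p.2) (t, x) (1, 0) :=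
  (hasDerivAt_slice_t' hu t x).deriv

lemma hasDerivAt_slice_t {u : ℝ → ℝ → ℝ} (hu : Smooth2 u) (t x : ℝ) :
    HasDerivAt (fun s => u s x) (Dt u t x) t := by
  rw [Dt_eq_fderiv hu t x]; exact hasDerivAt_slice_t' hu t x

lemma hasDerivAt_slice_x' {u : ℝ → ℝ → ℝ} (hu : Smooth2 u) (t x : ℝ) :
    HasDerivAt (fun s => u t s)
      (fderiv ℝ (fun p : ℝ × ℝ => u p.1 p.2) (t, x) (0, 1)) x := by
  have h1 : HasDerivAt (fun s : ℝ => ((t, s) : ℝ × ℝ)) ((0:ℝ), (1:ℝ)) x :=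
    (hasDerivAt_const x t).prodMk (hasDerivAt_id x)
  have h2 : DifferentiableAt ℝ (fun p : ℝ × ℝ => u p.1 p.2) (t, x) :=
    (hu.differentiable s2_one_le) (t, x)
  simpa [Function.comp_def] using h2.hasFDerivAt.comp_hasDerivAt x h1

lemma Dx_eq_fderiv {u : ℝ → ℝ → ℝ} (hu : Smooth2 u) (t x : ℝ) :
    Dx u t x = fderiv ℝ (fun p : ℝ × ℝ => u p.1 p.2) (t, x) (0, 1) :=
  (hasDerivAt_slice_x' hu t x).deriv

lemma hasDerivAt_slice_x {u : ℝ → ℝ → ℝ} (hu : Smooth2 u) (t x : ℝ) :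
    HasDerivAt (fun s => u t s) (Dx u t x) x := by
  rw [Dx_eq_fderiv hu t x]; exact hasDerivAt_slice_x' hu t x

lemma smooth2_fderiv_apply {u : ℝ → ℝ → ℝ} (hu : Smooth2 u) (w : ℝ × ℝ) :
    ContDiff ℝ (⊤ : ℕ∞) (fun p : ℝ × ℝ => fderiv ℝ (fun q : ℝ × ℝ => u q.1 q.2) p w) :=
  (hu.fderiv_right s2_add_one_le).clm_apply contDiff_const

lemma smooth2_dt {u : ℝ → ℝ → ℝ} (hu : Smooth2 u) : Smooth2 (Dt u) := by
  have h : (fun p : ℝ × ℝ => Dt u p.1 p.2)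
      = fun p : ℝ × ℝ => fderiv ℝ (fun q : ℝ × ℝ => u q.1 q.2) p (1, 0) :=
    funext fun p => Dt_eq_fderiv hu p.1 p.2
  unfold Smooth2
  rw [h]
  exact smooth2_fderiv_apply hu _

lemma smooth2_dx {u : ℝ → ℝ → ℝ} (hu : Smooth2 u) : Smooth2 (Dx u) := by
  have h : (fun p : ℝ × ℝ => Dx u p.1 p.2)
      = fun p : ℝ × ℝ => fderiv ℝ (fun q : ℝ × ℝ => u q.1 q.2) p (0, 1) :=
    funext fun p => Dx_eq_fderiv hu p.1 p.2
  unfold Smooth2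
  rw [h]
  exact smooth2_fderiv_apply hu _

/-- Clairaut / Schwarz: mixed partials commute for smooth functions. -/
lemma swap_partials {w : ℝ → ℝ → ℝ} (hw : Smooth2 w) (t x : ℝ) :
    Dt (Dx w) t x = Dx (Dt w) t x := by
  set f : ℝ × ℝ → ℝ := fun p => w p.1 p.2 with hf_def
  have hf : ContDiff ℝ (⊤ : ℕ∞) f := hw
  have hd : ∀ y, HasFDerivAt f (fderiv ℝ f y) y :=
    fun y => ((hf.differentiable s2_one_le) y).hasFDerivAt
  have hf' : ContDiff ℝ (⊤ : ℕ∞) (fderiv ℝ f) := hf.fderiv_right s2_add_one_le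
  have hf'' : HasFDerivAt (fderiv ℝ f) (fderiv ℝ (fderiv ℝ f) (t, x)) (t, x) :=
    ((hf'.differentiable s2_one_le) (t, x)).hasFDerivAt
  have hsymm := second_derivative_symmetric hd hf'' ((1:ℝ), (0:ℝ)) ((0:ℝ), (1:ℝ))
  -- evaluation lemma
  have heval : ∀ v₀ w₀ : ℝ × ℝ,
      fderiv ℝ (fun p : ℝ × ℝ => fderiv ℝ f p w₀) (t, x) v₀
        = fderiv ℝ (fderiv ℝ f) (t, x) v₀ w₀ := by
    intro v₀ w₀
    have h := hf''.clm_apply (hasFDerivAt_const w₀ ((t,x) : ℝ × ℝ))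
    rw [h.fderiv]
    simp
  have h1 : Dt (Dx w) t x
      = fderiv ℝ (fun p : ℝ × ℝ => fderiv ℝ f p (0, 1)) (t, x) (1, 0) := by
    have hg : Smooth2 (Dx w) := smooth2_dx hw
    rw [Dt_eq_fderiv hg t x]
    congr 1
    · apply Filter.EventuallyEq.fderiv_eq
      filter_upwards with p
      exact Dx_eq_fderiv hw p.1 p.2
  have h2 : Dx (Dt w) t x
      = fderiv ℝ (fun p : ℝ × ℝ => fderiv ℝ f p (1, 0)) (t, x) (0, 1) := by
    have hg : Smooth2 (Dt w) := smooth2_dt hw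
    rw [Dx_eq_fderiv hg t x]
    congr 1
    · apply Filter.EventuallyEq.fderiv_eq
      filter_upwards with p
      exact Dt_eq_fderiv hw p.1 p.2
  rw [h1, h2, heval, heval]
  exact hsymm

/-- If u solves the wave equation and v solves the adjoint equation along u,
then the Noether current of the time-translation symmetry is divergence-free. -/
theorem stmt_19
    (b c m : ℝ → ℝ)
    (hb : ContDiff ℝ (⊤ : ℕ∞) b) (hc : ContDiff ℝ (⊤ : ℕ∞) c) (hm : ContDiff ℝ (⊤ : ℕ∞) m)
    (u : ℝ → ℝ → ℝ) (hu : Smooth2 u) (hsol : ∀ t x, Fop b c m u t x = 0)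
    (v : ℝ → ℝ → ℝ) (hv : Smooth2 v)
    (hadj : ∀ t x, Lstar b c m u v t x = 0) :
    ∀ t x : ℝ,
      Dt (fun t x =>
        -(v t x) * Dt (Dt u) t x - (b (u t x) * v t x - Dt v t x) * Dt u t x) t x
      + Dx (fun t x =>
        v t x * Dt (Dx u) t x - (c (u t x) * v t x + Dx v t x) * Dt u t x) t x = 0 := by
  intro t x
  -- smoothness
  have hut : Smooth2 (Dt u) := smooth2_dt hu
  have hux : Smooth2 (Dx u) := smooth2_dx hu
  have hutt : Smooth2 (Dt (Dt u)) := smooth2_dt hut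
  have hutx : Smooth2 (Dt (Dx u)) := smooth2_dt hux
  have huxx : Smooth2 (Dx (Dx u)) := smooth2_dx hux
  have hvt : Smooth2 (Dt v) := smooth2_dt hv
  have hvx : Smooth2 (Dx v) := smooth2_dx hv
  -- t-slice derivatives at (t,x)
  have Hv_t := hasDerivAt_slice_t hv t x
  have Hvt_t := hasDerivAt_slice_t hvt t x
  have Hu_t := hasDerivAt_slice_t hu t x
  have Hut_t := hasDerivAt_slice_t hut t x
  have Hux_t := hasDerivAt_slice_t hux t x
  have Hutt_t := hasDerivAt_slice_t hutt t x
  have Huxx_t := hasDerivAt_slice_t huxx t x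
  -- x-slice derivatives at (t,x)
  have Hv_x := hasDerivAt_slice_x hv t x
  have Hvx_x := hasDerivAt_slice_x hvx t x
  have Hu_x := hasDerivAt_slice_x hu t x
  have Hut_x := hasDerivAt_slice_x hut t x
  have Hutx_x := hasDerivAt_slice_x hutx t x
  -- compositions with b, c, m
  have Hb_t : HasDerivAt (fun s => b (u s x)) (deriv b (u t x) * Dt u t x) t :=
    (((hb.differentiable s2_one_le) (u t x)).hasDerivAt).comp t Hu_t
  have Hc_t : HasDerivAt (fun s => c (u s x)) (deriv c (u t x) * Dt u t x) t :=
    (((hc.differentiable s2_one_le) (u t x)).hasDerivAt).comp t Hu_t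
  have Hm_t : HasDerivAt (fun s => m (u s x)) (deriv m (u t x) * Dt u t x) t :=
    (((hm.differentiable s2_one_le) (u t x)).hasDerivAt).comp t Hu_t
  have Hc_x : HasDerivAt (fun s => c (u t s)) (deriv c (u t x) * Dx u t x) x :=
    (((hc.differentiable s2_one_le) (u t x)).hasDerivAt).comp x Hu_x
  have Hb_x : HasDerivAt (fun s => b (u t s)) (deriv b (u t x) * Dx u t x) x :=
    (((hb.differentiable s2_one_le) (u t x)).hasDerivAt).comp x Hu_x
  -- time derivative of the first current component
  have H1 : Dt (fun t x =>
        -(v t x) * Dt (Dt u) t x - (b (u t x) * v t x - Dt v t x) * Dt u t x) t x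
      = (-(Dt v t x) * Dt (Dt u) t x + -(v t x) * Dt (Dt (Dt u)) t x)
        - ((deriv b (u t x) * Dt u t x * v t x + b (u t x) * Dt v t x
            - Dt (Dt v) t x) * Dt u t x
          + (b (u t x) * v t x - Dt v t x) * Dt (Dt u) t x) := by
    have := ((Hv_t.neg.mul Hutt_t).sub (((Hb_t.mul Hv_t).sub Hvt_t).mul Hut_t)).deriv
    simpa [Dt, Pi.mul_def, Pi.sub_def, Pi.neg_def, Pi.add_def] using this
  -- space derivative of the second current component
  have H2 : Dx (fun t x =>
        v t x * Dt (Dx u) t x - (c (u t x) * v t x + Dx v t x) * Dt u t x) t x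
      = (Dx v t x * Dt (Dx u) t x + v t x * Dx (Dt (Dx u)) t x)
        - ((deriv c (u t x) * Dx u t x * v t x + c (u t x) * Dx v t x
            + Dx (Dx v) t x) * Dt u t x
          + (c (u t x) * v t x + Dx v t x) * Dx (Dt u) t x) := by
    have := ((Hv_x.mul Hutx_x).sub (((Hc_x.mul Hv_x).add Hvx_x).mul Hut_x)).deriv
    simpa [Dx, Pi.mul_def, Pi.sub_def, Pi.neg_def, Pi.add_def] using this
  -- t-derivative of the PDE
  have E1 : (Dt (Dt (Dt u)) t x - Dt (Dx (Dx u)) t x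
      + (deriv b (u t x) * Dt u t x * Dt u t x + b (u t x) * Dt (Dt u) t x)
      + (deriv c (u t x) * Dt u t x * Dx u t x + c (u t x) * Dt (Dx u) t x)
      + deriv m (u t x) * Dt u t x) = 0 := by
    have hF : HasDerivAt (fun s => Fop b c m u s x)
        (Dt (Dt (Dt u)) t x - Dt (Dx (Dx u)) t x
          + (deriv b (u t x) * Dt u t x * Dt u t x + b (u t x) * Dt (Dt u) t x)
          + (deriv c (u t x) * Dt u t x * Dx u t x + c (u t x) * Dt (Dx u) t x)
          + deriv m (u t x) * Dt u t x) t := by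
      have := ((((Hutt_t.sub Huxx_t).add (Hb_t.mul Hut_t)).add (Hc_t.mul Hux_t)).add Hm_t)
      simpa [Fop, mul_comm, Pi.mul_def, Pi.sub_def, Pi.neg_def, Pi.add_def] using this
    have hzero : (fun s => Fop b c m u s x) = fun _ => (0:ℝ) :=
      funext fun s => hsol s x
    have := hF.deriv
    rw [hzero] at this
    simpa using this.symm
  -- adjoint equation
  have E2 : Dt (Dt v) t x - Dx (Dx v) t x - b (u t x) * Dt v t x
      - c (u t x) * Dx v t x + deriv m (u t x) * v t x = 0 := hadj t x
  -- swapping mixed partials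
  have S1 : Dx (Dt (Dx u)) t x = Dt (Dx (Dx u)) t x := (swap_partials hux t x).symm
  have S2 : Dx (Dt u) t x = Dt (Dx u) t x := (swap_partials hu t x).symm
  rw [H1, H2, S1, S2]
  linear_combination (-(v t x)) * E1 + (Dt u t x) * E2
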